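/- If f ∈ S_{m,L} with f(0) = 0 and ∇f(0) = 0, then the function V(x) := (L-m)·f_m(x) - ‖∇f_m(x)‖²/2 is nonnegative everywhere and V(0) = 0, i.e., V has a global minimum at 0 with value 0. -/

import Mathlib

open InnerProductSpace Set Filter Topology

section Aux

variable {E : Type*} [NormedAddCommGroup E] [InnerProductSpace ℝ E] [CompleteSpace E]

local notation "⟪" x ", " y "⟫" => @inner ℝ _ _ x y

lemma hasFDerivAt_half_sq (x : E) :
    HasFDerivAt (fun y : E => ‖y‖ ^ 2 / 2) ((2:ℝ)⁻¹ • ((fderivInnerCLM ℝ ((x : E), x)).comp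
      ((ContinuousLinearMap.id ℝ E).prod (ContinuousLinearMap.id ℝ E)))) x := by
  have h1 : HasFDerivAt (fun y : E => ⟪y, y⟫)
      ((fderivInnerCLM ℝ ((x : E), x)).comp
        ((ContinuousLinearMap.id ℝ E).prod (ContinuousLinearMap.id ℝ E))) x :=
    (hasFDerivAt_id x).inner ℝ (hasFDerivAt_id x)
  have h2 := h1.const_smul (2:ℝ)⁻¹
  have : (fun y : E => (2:ℝ)⁻¹ • ⟪y, y⟫) = fun y : E => ‖y‖ ^ 2 / 2 := by
    funext y
    rw [real_inner_self_eq_norm_sq, smul_eq_mul]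
    ring
  rw [← this]; exact h2

lemma hasFDerivAt_half_sq' (x : E) :
    HasFDerivAt (fun y : E => ‖y‖ ^ 2 / 2) (innerSL ℝ x) x := by
  have h := hasFDerivAt_half_sq x
  refine h.congr_fderiv ?_
  ext v
  simp [fderivInnerCLM, real_inner_comm]
  ring

/-- First-order condition for a convex differentiable function. -/
lemma convexOn_first_order {g : E → ℝ} (hg : ConvexOn ℝ univ g)
    {x : E} (hd : DifferentiableAt ℝ g x) (y : E) :
    g x + fderiv ℝ g x (y - x) ≤ g y := by
  set v := y - x with hv
  have hline : HasDerivAt (fun t : ℝ => x + t • v) v 0 := by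
    simpa using ((hasDerivAt_id (0:ℝ)).smul_const v).const_add x
  have hφ : HasDerivAt (fun t : ℝ => g (x + t • v)) (fderiv ℝ g x v) 0 := by
    have h0 : HasFDerivAt g (fderiv ℝ g x) ((fun t : ℝ => x + t • v) 0) := by
      simpa using hd.hasFDerivAt
    exact h0.comp_hasDerivAt 0 hline
  have hslope : Tendsto (fun t : ℝ => (g (x + t • v) - g x) / t) (𝓝[>] (0:ℝ))
      (𝓝 (fderiv ℝ g x v)) := by
    have := (hasDerivAt_iff_tendsto_slope.mp hφ).mono_left
      (nhdsWithin_mono 0 (fun t ht => by simpa using (ne_of_gt ht)))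
    refine this.congr (fun t => ?_)
    simp [slope_def_field, div_eq_inv_mul]
  have hev : ∀ᶠ t in 𝓝[>] (0:ℝ), (g (x + t • v) - g x) / t ≤ g y - g x := by
    filter_upwards [Ioc_mem_nhdsGT_of_mem (by norm_num : (0:ℝ) ∈ Ico (0:ℝ) 1)] with t ht
    have hconv := hg.2 (mem_univ x) (mem_univ y)
      (by linarith [ht.2] : (0:ℝ) ≤ 1 - t) ht.1.le (by ring)
    have harg : (1 - t) • x + t • y = x + t • v := by
      rw [hv]; module
    rw [harg] at hconv
    simp only [smul_eq_mul] at hconv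
    rw [div_le_iff₀ ht.1]
    nlinarith [hconv]
  have := le_of_tendsto hslope hev
  linarith

end Aux

set_option maxHeartbeats 1000000 in
theorem lyapunov_nonneg
    (d : ℕ) (m L : ℝ) (hm : 0 ≤ m) (hmL : m < L)
    (f : EuclideanSpace ℝ (Fin d) → ℝ) (hf : Differentiable ℝ f)
    (fm fL : EuclideanSpace ℝ (Fin d) → ℝ)
    (hfm_def : fm = fun x => f x - m * (‖x‖ ^ 2 / 2))
    (hfL_def : fL = fun x => L * (‖x‖ ^ 2 / 2) - f x)
    (hfm : ConvexOn ℝ Set.univ fm) (hfL : ConvexOn ℝ Set.univ fL)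
    (hf0 : f 0 = 0) (hgrad0 : gradient f 0 = 0)
    (V : EuclideanSpace ℝ (Fin d) → ℝ)
    (hV : V = fun x => (L - m) * fm x - ‖gradient fm x‖ ^ 2 / 2) :
    V 0 = 0 ∧ ∀ x, 0 ≤ V x := by
  -- derivatives
  have hFm : ∀ x : EuclideanSpace ℝ (Fin d), HasFDerivAt fm (fderiv ℝ f x - m • innerSL ℝ x) x := by
    intro x
    rw [hfm_def]
    exact (hf x).hasFDerivAt.sub ((hasFDerivAt_half_sq' x).const_mul m)
  have hFL : ∀ x : EuclideanSpace ℝ (Fin d), HasFDerivAt fL (L • innerSL ℝ x - fderiv ℝ f x) x := by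
    intro x
    rw [hfL_def]
    exact ((hasFDerivAt_half_sq' x).const_mul L).sub (hf x).hasFDerivAt
  have hdfm : Differentiable ℝ fm := fun x => (hFm x).differentiableAt
  have hdfL : Differentiable ℝ fL := fun x => (hFL x).differentiableAt
  -- gradient of fm
  have hGinner : ∀ (x v : EuclideanSpace ℝ (Fin d)), (inner ℝ (_root_.gradient fm x) v : ℝ) = fderiv ℝ fm x v := by
    intro x v
    rw [_root_.gradient]
    exact toDual_symm_apply
  have hfderiv_f0 : fderiv ℝ f 0 = 0 := by
    have h00 : (toDual ℝ (EuclideanSpace ℝ (Fin d))).symm (fderiv ℝ f 0) = 0 := hgrad0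
    simpa using (toDual ℝ (EuclideanSpace ℝ (Fin d))).symm.map_eq_zero_iff.mp h00
  have hG0 : gradient fm 0 = 0 := by
    rw [_root_.gradient, (hFm 0).fderiv]
    simp [hfderiv_f0]
  have hfm0 : fm 0 = 0 := by rw [hfm_def]; simp [hf0]
  constructor
  · rw [hV]
    simp [hG0, hfm0]
  · intro x
    set ℓ := L - m with hℓdef
    have hℓ : 0 < ℓ := by simp [hℓdef]; linarith
    set G : EuclideanSpace ℝ (Fin d) := gradient fm x with hGdef
    set y : EuclideanSpace ℝ (Fin d) := x - ℓ⁻¹ • G with hy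
    -- fm nonneg
    have h1 : 0 ≤ fm y := by
      have := convexOn_first_order hfm (hdfm 0) y
      have hfd0 : fderiv ℝ fm 0 = 0 := by
        rw [(hFm 0).fderiv]; simp [hfderiv_f0]
      rw [hfm0, hfd0] at this
      simpa using this
    -- smoothness inequality at x
    have h2 : fL x + fderiv ℝ fL x (y - x) ≤ fL y := convexOn_first_order hfL (hdfL x) y
    rw [(hFL x).fderiv] at h2
    have hyx : y - x = -(ℓ⁻¹ • G) := by rw [hy]; abel
    have hfderiv_f : ∀ v : EuclideanSpace ℝ (Fin d),
        fderiv ℝ f x v = (inner ℝ G v : ℝ) + m * (inner ℝ x v : ℝ) := by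
      intro v
      rw [hGdef, hGinner, (hFm x).fderiv]
      simp only [ContinuousLinearMap.sub_apply, ContinuousLinearMap.smul_apply, innerSL_apply_apply,
        smul_eq_mul]
      ring
    have h2' : fL x + (L * (inner ℝ x (y - x) : ℝ)
        - ((inner ℝ G (y - x) : ℝ) + m * (inner ℝ x (y - x) : ℝ))) ≤ fL y := by
      have : (L • innerSL ℝ x - fderiv ℝ f x) (y - x)
          = L * (inner ℝ x (y - x) : ℝ) - fderiv ℝ f x (y - x) := by
        simp only [ContinuousLinearMap.sub_apply, ContinuousLinearMap.smul_apply, innerSL_apply_apply,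
          smul_eq_mul]
      rw [this, hfderiv_f] at h2
      exact h2
    -- scalar abbreviations
    have hxy_inner : (inner ℝ x (y - x) : ℝ) = -(ℓ⁻¹ * (inner ℝ x G : ℝ)) := by
      rw [hyx, inner_neg_right, real_inner_smul_right]
    have hGyx_inner : (inner ℝ G (y - x) : ℝ) = -(ℓ⁻¹ * ‖G‖ ^ 2) := by
      rw [hyx, inner_neg_right, real_inner_smul_right, real_inner_self_eq_norm_sq]
    have hny : ‖y‖ ^ 2 = ‖x‖ ^ 2 - 2 * (ℓ⁻¹ * (inner ℝ x G : ℝ)) + ℓ⁻¹ ^ 2 * ‖G‖ ^ 2 := by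
      rw [hy, norm_sub_sq_real, real_inner_smul_right, norm_smul, Real.norm_eq_abs,
        abs_of_pos (inv_pos.mpr hℓ)]
      ring
    have hfLx : fL x = L * (‖x‖ ^ 2 / 2) - (fm x + m * (‖x‖ ^ 2 / 2)) := by
      rw [hfL_def, hfm_def]; ring
    have hfLy : fL y = L * (‖y‖ ^ 2 / 2) - (fm y + m * (‖y‖ ^ 2 / 2)) := by
      rw [hfL_def, hfm_def]; ring
    rw [hfLx, hfLy, hxy_inner, hGyx_inner, hny] at h2'
    have hL : L = ℓ + m := by rw [hℓdef]; ring
    rw [hL] at h2'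
    set t := ℓ⁻¹ with htdef
    have ht : ℓ * t = 1 := mul_inv_cancel₀ (ne_of_gt hℓ)
    have e : ℓ * t ^ 2 * ‖G‖ ^ 2 = t * ‖G‖ ^ 2 := by
      have h' : ℓ * t ^ 2 * ‖G‖ ^ 2 = (ℓ * t) * (t * ‖G‖ ^ 2) := by ring
      rw [h', ht, one_mul]
    clear_value t ℓ G y
    have h3 : t * ‖G‖ ^ 2 / 2 ≤ fm x - fm y := by nlinarith [h2', e]
    have h4 : t * ‖G‖ ^ 2 / 2 ≤ fm x := by linarith
    have h5 : ℓ * (t * ‖G‖ ^ 2 / 2) ≤ ℓ * fm x := mul_le_mul_of_nonneg_left h4 hℓ.le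
    have h6 : ℓ * (t * ‖G‖ ^ 2 / 2) = ‖G‖ ^ 2 / 2 := by
      have h' : ℓ * (t * ‖G‖ ^ 2 / 2) = (ℓ * t) * (‖G‖ ^ 2 / 2) := by ring
      rw [h', ht, one_mul]
    rw [hV]
    simp only [← hGdef]
    simp only [hℓdef] at h5 h6 ⊢
    linarith
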